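/- Let Z be a chi-squared random variable with k degrees of freedom. Then for every x ≥ 0, P(|Z − k| > 2√(kx) + 2x) ≤ 2e^{−x}. -/

import Mathlib

open MeasureTheory ProbabilityTheory

/-- The chi-squared distribution with `k` degrees of freedom, as the Gamma
distribution with shape `k/2` and rate `1/2`. -/
noncomputable def chiSquared (k : ℕ) : Measure ℝ :=
  gammaMeasure ((k : ℝ) / 2) (1 / 2)

section LaurentMassartAux

open Real Set

lemma quad_le_exp {s : ℝ} (hs : 0 ≤ s) : 1 + 2*s + 2*s^2 ≤ Real.exp (2*s) := by
  have hd : ∀ y : ℝ, HasDerivAt (fun s : ℝ => Real.exp (2*s) - (1 + 2*s + 2*s^2))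
      (2*Real.exp (2*y) - (2 + 4*y)) y := by
    intro y
    have h1 : HasDerivAt (fun s : ℝ => 2*s) 2 y := by
      simpa using (hasDerivAt_id y).const_mul 2
    have h2 : HasDerivAt (fun s : ℝ => Real.exp (2*s)) (Real.exp (2*y) * 2) y :=
      (Real.hasDerivAt_exp (2*y)).comp y h1
    have hsq : HasDerivAt (fun s : ℝ => s^2) (2*y) y := by
      simpa using hasDerivAt_pow 2 y
    have h3 : HasDerivAt (fun s : ℝ => 1 + 2*s + 2*s^2) (2 + 4*y) y := by
      have := ((hasDerivAt_const y (1:ℝ)).add h1).add (hsq.const_mul 2)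
      convert this using 1
      exacts [rfl, rfl, rfl, by ring]
    have := h2.sub h3
    convert this using 1
    exacts [rfl, rfl, rfl, by ring]
  have key : MonotoneOn (fun s : ℝ => Real.exp (2*s) - (1 + 2*s + 2*s^2)) (Ici 0) := by
    apply monotoneOn_of_deriv_nonneg (convex_Ici 0)
    · exact (Continuous.continuousOn (by continuity))
    · intro y _
      exact (hd y).differentiableAt.differentiableWithinAt
    · intro y hy
      rw [(hd y).deriv]
      have := Real.add_one_le_exp (2*y)
      nlinarith
  have h0 : (0:ℝ) ∈ Ici (0:ℝ) := self_mem_Ici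
  have := key h0 hs hs
  simp only [mul_zero, Real.exp_zero] at this
  nlinarith

lemma one_sub_mul_exp_le {y : ℝ} (hy : 0 ≤ y) : (1 - y) * Real.exp (y + y^2/2) ≤ 1 := by
  have hd : ∀ y : ℝ, HasDerivAt (fun s : ℝ => (1 - s) * Real.exp (s + s^2/2))
      (-(y^2) * Real.exp (y + y^2/2)) y := by
    intro y
    have h1 : HasDerivAt (fun s : ℝ => 1 - s) (-1) y := by
      simpa using (hasDerivAt_id y).const_sub 1
    have hsq : HasDerivAt (fun s : ℝ => s^2/2) y y := by
      simpa using (hasDerivAt_pow 2 y).div_const 2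
    have h2 : HasDerivAt (fun s : ℝ => s + s^2/2) (1 + y) y :=
      (hasDerivAt_id y).add hsq
    have h3 : HasDerivAt (fun s : ℝ => Real.exp (s + s^2/2))
        (Real.exp (y + y^2/2) * (1 + y)) y := (Real.hasDerivAt_exp _).comp y h2
    have := h1.mul h3
    convert this using 1
    exacts [rfl, rfl, rfl, by ring]
  have key : AntitoneOn (fun s : ℝ => (1 - s) * Real.exp (s + s^2/2)) (Ici 0) := by
    apply antitoneOn_of_deriv_nonpos (convex_Ici 0)
    · exact (Continuous.continuousOn (by continuity))
    · intro y _
      exact (hd y).differentiableAt.differentiableWithinAt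
    · intro y hy
      rw [(hd y).deriv]
      have := Real.exp_pos (y + y^2/2)
      nlinarith
  have := key self_mem_Ici hy hy
  simpa using this

lemma intOnGamma {a c : ℝ} (ha : 0 < a) (hc : 0 < c) :
    IntegrableOn (fun z : ℝ => z ^ (a-1) * Real.exp (-(c*z))) (Ioi 0) := by
  have := integrableOn_rpow_mul_exp_neg_mul_rpow (s := a-1) (p := 1) (by linarith) one_pos hc
  refine this.congr_fun (fun z hz => ?_) measurableSet_Ioi
  simp only [Real.rpow_one]
  ring_nf

lemma lintegral_gamma_aux {a c : ℝ} (C : ℝ) (ha : 0 < a) (hc : 0 < c) (hC : 0 ≤ C) :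
    ∫⁻ z in Ioi (0:ℝ), ENNReal.ofReal (C * (z ^ (a-1) * Real.exp (-(c*z)))) =
      ENNReal.ofReal (C * ((1/c) ^ a * Real.Gamma a)) := by
  rw [← ofReal_integral_eq_lintegral_ofReal]
  · rw [integral_const_mul, integral_rpow_mul_exp_neg_mul_Ioi ha hc]
  · exact ((intOnGamma ha hc).const_mul C)
  · filter_upwards [ae_restrict_mem measurableSet_Ioi] with z hz
    have hz' : (0:ℝ) < z := hz
    positivity

lemma upper_tail {a r t u : ℝ} (ha : 0 < a) (hr : 0 < r) (ht0 : 0 ≤ t) (htr : t < r)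
    (hu : 0 < u) :
    ∫⁻ z in Ici u, gammaPDF a r z ≤
      ENNReal.ofReal (Real.exp (-(t*u)) * (r/(r-t)) ^ a) := by
  set C : ℝ := Real.exp (-(t*u)) * (r ^ a / Real.Gamma a) with hCdef
  have hC : 0 ≤ C := by positivity
  calc ∫⁻ z in Ici u, gammaPDF a r z
      ≤ ∫⁻ z in Ici u, ENNReal.ofReal (C * (z ^ (a-1) * Real.exp (-((r-t)*z)))) := by
        refine setLIntegral_mono' measurableSet_Ici (fun z hz => ?_)
        have hzu : u ≤ z := hz
        have hz0 : 0 ≤ z := le_trans hu.le hzu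
        rw [gammaPDF_of_nonneg hz0]
        refine ENNReal.ofReal_le_ofReal ?_
        have hexp : 1 ≤ Real.exp (t*(z-u)) := by
          rw [← Real.exp_zero]
          exact Real.exp_le_exp.mpr (by nlinarith)
        have hfac : (0:ℝ) ≤ r ^ a / Real.Gamma a * z ^ (a-1) * Real.exp (-(r*z)) := by
          positivity
        have hE : Real.exp (-(t*u)) * Real.exp (-((r-t)*z)) =
            Real.exp (-(r*z)) * Real.exp (t*(z-u)) := by
          rw [← Real.exp_add, ← Real.exp_add]; ring_nf
        have : C * (z ^ (a-1) * Real.exp (-((r-t)*z))) =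
            (r ^ a / Real.Gamma a * z ^ (a-1) * Real.exp (-(r*z))) * Real.exp (t*(z-u)) := by
          rw [hCdef]
          linear_combination (r ^ a / Real.Gamma a * z ^ (a-1)) * hE
        rw [this]
        nlinarith
    _ ≤ ∫⁻ z in Ioi (0:ℝ), ENNReal.ofReal (C * (z ^ (a-1) * Real.exp (-((r-t)*z)))) :=
        lintegral_mono_set (fun z hz => lt_of_lt_of_le hu hz)
    _ = ENNReal.ofReal (C * ((1/(r-t)) ^ a * Real.Gamma a)) :=
        lintegral_gamma_aux C ha (by linarith) hC
    _ = ENNReal.ofReal (Real.exp (-(t*u)) * (r/(r-t)) ^ a) := by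
        congr 1
        rw [hCdef, Real.div_rpow hr.le (by linarith : (0:ℝ) ≤ r - t),
          Real.div_rpow zero_le_one (by linarith : (0:ℝ) ≤ r - t), Real.one_rpow]
        have hG : Real.Gamma a ≠ 0 := (Real.Gamma_pos_of_pos ha).ne'
        field_simp

lemma lower_tail {a r t u : ℝ} (ha : 0 < a) (hr : 0 < r) (ht0 : 0 ≤ t) (hu : 0 < u) :
    ∫⁻ z in Iic u, gammaPDF a r z ≤
      ENNReal.ofReal (Real.exp (t*u) * (r/(r+t)) ^ a) := by
  set C : ℝ := Real.exp (t*u) * (r ^ a / Real.Gamma a) with hCdef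
  have hC : 0 ≤ C := by positivity
  rw [lintegral_Iic_eq_lintegral_Iio_add_Icc _ hu.le,
    lintegral_gammaPDF_of_nonpos le_rfl, zero_add]
  calc ∫⁻ z in Icc (0:ℝ) u, gammaPDF a r z
      = ∫⁻ z in Ioc (0:ℝ) u, gammaPDF a r z :=
        (setLIntegral_congr Ioc_ae_eq_Icc).symm
    _ ≤ ∫⁻ z in Ioc (0:ℝ) u, ENNReal.ofReal (C * (z ^ (a-1) * Real.exp (-((r+t)*z)))) := by
        refine setLIntegral_mono' measurableSet_Ioc (fun z hz => ?_)
        obtain ⟨hz0, hzu⟩ := hz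
        rw [gammaPDF_of_nonneg hz0.le]
        refine ENNReal.ofReal_le_ofReal ?_
        have hexp : 1 ≤ Real.exp (t*(u-z)) := by
          rw [← Real.exp_zero]
          exact Real.exp_le_exp.mpr (by nlinarith)
        have hfac : (0:ℝ) ≤ r ^ a / Real.Gamma a * z ^ (a-1) * Real.exp (-(r*z)) := by
          positivity
        have hE : Real.exp (t*u) * Real.exp (-((r+t)*z)) =
            Real.exp (-(r*z)) * Real.exp (t*(u-z)) := by
          rw [← Real.exp_add, ← Real.exp_add]; ring_nf
        have : C * (z ^ (a-1) * Real.exp (-((r+t)*z))) =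
            (r ^ a / Real.Gamma a * z ^ (a-1) * Real.exp (-(r*z))) * Real.exp (t*(u-z)) := by
          rw [hCdef]
          linear_combination (r ^ a / Real.Gamma a * z ^ (a-1)) * hE
        rw [this]
        nlinarith
    _ ≤ ∫⁻ z in Ioi (0:ℝ), ENNReal.ofReal (C * (z ^ (a-1) * Real.exp (-((r+t)*z)))) :=
        lintegral_mono_set (fun z hz => hz.1)
    _ = ENNReal.ofReal (C * ((1/(r+t)) ^ a * Real.Gamma a)) :=
        lintegral_gamma_aux C ha (by linarith) hC
    _ = ENNReal.ofReal (Real.exp (t*u) * (r/(r+t)) ^ a) := by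
        congr 1
        rw [hCdef, Real.div_rpow hr.le (by linarith : (0:ℝ) ≤ r + t),
          Real.div_rpow zero_le_one (by linarith : (0:ℝ) ≤ r + t), Real.one_rpow]
        have hG : Real.Gamma a ≠ 0 := (Real.Gamma_pos_of_pos ha).ne'
        field_simp
/-- Laurent–Massart two-sided concentration for the chi-squared distribution. -/
theorem chiSquared_laurent_massart (k : ℕ) (x : ℝ) (hx : 0 ≤ x) :
    ((chiSquared k) {z : ℝ | 2 * Real.sqrt (k * x) + 2 * x < |z - k|}).toReal
      ≤ 2 * Real.exp (-x) := by
  rcases Nat.eq_zero_or_pos k with hk | hk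
  · subst hk
    have h0 : chiSquared 0 = 0 := by
      have h : gammaPDF (((0:ℕ):ℝ)/2) (1/2) = fun _ => 0 := by
        funext z
        simp [gammaPDF_eq, Real.Gamma_zero]
      rw [chiSquared, gammaMeasure, h]
      simpa using withDensity_zero
    rw [h0]
    simp
    positivity
  -- main case
  have hK1 : (1:ℝ) ≤ (k:ℝ) := by exact_mod_cast hk
  set K : ℝ := (k:ℝ) with hK
  clear_value K
  have hK0 : (0:ℝ) < K := by linarith
  have ha : (0:ℝ) < K/2 := by linarith
  set sq : ℝ := Real.sqrt (K*x) with hsqdef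
  have hsq0 : 0 ≤ sq := Real.sqrt_nonneg _
  have hsq2 : sq^2 = K*x := Real.sq_sqrt (by positivity)
  clear_value sq
  set w : ℝ := sq/K with hwdef
  have hw0 : 0 ≤ w := by positivity
  have hsqw : sq = K*w := by rw [hwdef]; field_simp
  clear_value w
  have hxw : x = K*w^2 := by
    have h1 : (K*w)^2 = K*x := by rw [← hsqw]; exact hsq2
    have h2 : K^2*w^2 = K*x := by nlinarith
    field_simp at h2 ⊢
    nlinarith
  set m : ℝ := 2*sq + 2*x with hm
  have hm0 : 0 ≤ m := by positivity
  clear_value m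
  set u : ℝ := K + m with hu_def
  have hu : 0 < u := by simp only [hu_def]; linarith
  clear_value u
  set u' : ℝ := K - 2*sq with hu'_def
  clear_value u'
  have hmeas : ∀ (s : Set ℝ), MeasurableSet s →
      chiSquared k s = ∫⁻ z in s, gammaPDF (K/2) (1/2) z := by
    intro s hs
    rw [hK, chiSquared, gammaMeasure, withDensity_apply _ hs]
  have hsub : {z : ℝ | m < |z - K|} ⊆ Ici u ∪ Iic u' := by
    intro z hz
    simp only [mem_setOf_eq] at hz
    rw [lt_abs] at hz
    rcases hz with h | h
    · left; simp only [mem_Ici, hu_def]; linarith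
    · right; simp only [mem_Iic, hu'_def]; linarith
  -- upper tail
  have hb1 : chiSquared k (Ici u) ≤ ENNReal.ofReal (Real.exp (-x)) := by
    rw [hmeas _ measurableSet_Ici]
    set t₁ : ℝ := (u - K)/(2*u) with ht₁def
    have hune : u ≠ 0 := hu.ne'
    have ht₁0 : 0 ≤ t₁ := by
      apply div_nonneg _ (by linarith)
      simp only [hu_def]; linarith
    have ht₁r : t₁ < 1/2 := by
      rw [ht₁def, div_lt_iff₀ (by linarith)]
      linarith
    refine (upper_tail ha one_half_pos ht₁0 ht₁r hu).trans (ENNReal.ofReal_le_ofReal ?_)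
    have hhalf : (1/2:ℝ) - t₁ = K/(2*u) := by
      rw [ht₁def]; field_simp; ring
    have hdiv : (1/2:ℝ)/((1/2:ℝ)-t₁) = u/K := by
      rw [hhalf]; field_simp
    have htu : t₁ * u = sq + x := by
      rw [ht₁def]; field_simp; linarith [hu_def, hm]
    rw [hdiv, htu]
    have huK : u/K = 1 + 2*w + 2*w^2 := by
      rw [hu_def, hm, hsqw]
      field_simp
      nlinarith [hxw]
    have hquad : u/K ≤ Real.exp (2*w) := huK ▸ quad_le_exp hw0
    have hrpow : (u/K)^(K/2) ≤ Real.exp (2*w) ^ (K/2) :=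
      Real.rpow_le_rpow (by positivity) hquad ha.le
    have hexp : Real.exp (2*w) ^ (K/2) = Real.exp sq := by
      rw [← Real.exp_mul]
      congr 1
      rw [hsqw]; ring
    calc Real.exp (-(sq + x)) * (u/K)^(K/2)
        ≤ Real.exp (-(sq + x)) * Real.exp sq := by
          refine mul_le_mul_of_nonneg_left ?_ (Real.exp_pos _).le
          rw [← hexp]; exact hrpow
      _ = Real.exp (-x) := by rw [← Real.exp_add]; congr 1; ring
  -- lower tail
  have hb2 : chiSquared k (Iic u') ≤ ENNReal.ofReal (Real.exp (-x)) := by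
    rw [hmeas _ measurableSet_Iic]
    by_cases hu' : 0 < u'
    · set t₂ : ℝ := (K - u')/(2*u') with ht₂def
      have ht₂0 : 0 ≤ t₂ := by
        apply div_nonneg _ (by linarith)
        simp only [hu'_def]; linarith
      refine (lower_tail ha one_half_pos ht₂0 hu').trans (ENNReal.ofReal_le_ofReal ?_)
      have hu'ne : u' ≠ 0 := hu'.ne'
      have hhalf : (1/2:ℝ) + t₂ = K/(2*u') := by
        rw [ht₂def]; field_simp; ring
      have hdiv : (1/2:ℝ)/((1/2:ℝ)+t₂) = u'/K := by
        rw [hhalf]; field_simp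
      have htu : t₂ * u' = sq := by
        have hKu : K - u' = 2*sq := by rw [hu'_def]; ring
        rw [ht₂def, hKu]
        field_simp
      rw [hdiv, htu]
      have hu'K : u'/K = 1 - 2*w := by
        rw [hu'_def, hsqw]; field_simp
      have h2w : 1 - 2*w ≤ Real.exp (-(2*w + 2*w^2)) := by
        have h := one_sub_mul_exp_le (y := 2*w) (by linarith)
        have hA : (2*w) + (2*w)^2/2 = 2*w + 2*w^2 := by ring
        rw [hA] at h
        have hE : (0:ℝ) < Real.exp (2*w + 2*w^2) := Real.exp_pos _
        rw [Real.exp_neg, ← one_div]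
        exact (le_div_iff₀ hE).mpr h
      have hquad : u'/K ≤ Real.exp (-(2*w + 2*w^2)) := hu'K ▸ h2w
      have hrpow : (u'/K)^(K/2) ≤ Real.exp (-(2*w + 2*w^2)) ^ (K/2) :=
        Real.rpow_le_rpow (by positivity) hquad ha.le
      have hexp2 : Real.exp (-(2*w + 2*w^2)) ^ (K/2) = Real.exp (-(sq + x)) := by
        rw [← Real.exp_mul]
        congr 1
        rw [hsqw, hxw]; ring
      calc Real.exp sq * (u'/K)^(K/2)
          ≤ Real.exp sq * Real.exp (-(sq + x)) := by
            refine mul_le_mul_of_nonneg_left ?_ (Real.exp_pos _).le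
            rw [← hexp2]; exact hrpow
        _ = Real.exp (-x) := by rw [← Real.exp_add]; congr 1; ring
    · push_neg at hu'
      calc ∫⁻ z in Iic u', gammaPDF (K/2) (1/2) z
          ≤ ∫⁻ z in Iic 0, gammaPDF (K/2) (1/2) z :=
            lintegral_mono_set (Iic_subset_Iic.mpr hu')
        _ = ∫⁻ z in Iio 0, gammaPDF (K/2) (1/2) z :=
            (setLIntegral_congr Iio_ae_eq_Iic).symm
        _ = 0 := lintegral_gammaPDF_of_nonpos le_rfl
        _ ≤ _ := zero_le
  have hfinal : chiSquared k {z : ℝ | m < |z - K|} ≤ ENNReal.ofReal (2 * Real.exp (-x)) := by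
    calc chiSquared k {z : ℝ | m < |z - K|}
        ≤ chiSquared k (Ici u ∪ Iic u') := measure_mono hsub
      _ ≤ chiSquared k (Ici u) + chiSquared k (Iic u') := measure_union_le _ _
      _ ≤ ENNReal.ofReal (Real.exp (-x)) + ENNReal.ofReal (Real.exp (-x)) :=
          add_le_add hb1 hb2
      _ = ENNReal.ofReal (2 * Real.exp (-x)) := by
          rw [← ENNReal.ofReal_add (Real.exp_pos _).le (Real.exp_pos _).le]
          congr 1
          ring
  exact ENNReal.toReal_le_of_le_ofReal (by positivity) hfinal

end LaurentMassartAux
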